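/- For i fixed, let y_i ∈ ℝ^{n_i}, let X_i be an n_i × p real matrix, Z_i an n_i × r real matrix, β ∈ ℝ^p, and let Ω be an r × r symmetric positive definite matrix. For j = 1, …, n_i let h_{ij} be the log-partition function of a one-parameter exponential family observation y_{ij} (so h_{ij}'' ≥ 0), and define g_i(η) = (h_{i1}'(η_1), …, h_{in_i}'(η_{n_i}))^T and H_i(η) = diag(h_{i1}''(η_1), …, h_{in_i}''(η_{n_i})) for η ∈ ℝ^{n_i}. Define Λ_i(η̂) = (Ω + Z_i^T H_i(η̂) Z_i)^{−1} and λ_i(η̂) = Λ_i(η̂) Z_i^T { y_i − g_i(η̂) + H_i(η̂)(η̂ − X_i β) }. Let c_i ∈ (ℝ ∪ {±∞})^{n_i} have coordinates c_{ij} = η̂_{ij}^{ML} when the MLE exists and c_{ij} = lim_{h_{ij}'(η)→y_{ij}} η ∈ {±∞} otherwise, where in the latter case h_{ij}'(η) → y_{ij}, h_{ij}''(η) → 0 and η·h_{ij}''(η) → 0 as η → c_{ij}. Then the limit of λ_i(η̂) as η̂ → c_i exists; moreover, if the MLE η̂_{ij}^{ML} does not exist for every j = 1, …, n_i, this limit equals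 the zero vector. -/

import Mathlib

open Matrix Filter Topology

set_option maxHeartbeats 1000000 in
/-- **Existence of the limit of `λ_i` (Theorem 1).** In the GLMM with canonical link,
`h1 j = h_{ij}'` and `h2 j = h_{ij}'' ≥ 0` are the first and second derivatives of the
log-partition functions, `Λ_i(η̂) = (Ω + Z_iᵀ H_i(η̂) Z_i)⁻¹` and
`λ_i(η̂) = Λ_i(η̂) Z_iᵀ{ y_i − g_i(η̂) + H_i(η̂)(η̂ − X_i β) }`. For each `j`, the filter
`F j` describes `η̂_{ij} → c_{ij}`: either the MLE exists (`c_{ij} ∈ ℝ` with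
`h_{ij}'(c_{ij}) = y_{ij}`), or the MLE does not exist, `c_{ij} = ±∞`, and
`h_{ij}' → y_{ij}`, `h_{ij}'' → 0`, `η · h_{ij}''(η) → 0` along `F j` (Lemma 1).
Then the limit of `λ_i(η̂)` as `η̂ → c_i` exists; moreover, if the MLE does not exist
for every `j`, the limit is the zero vector. -/
theorem lambda_limit_exists
    (ni p r : ℕ)
    (y : Fin ni → ℝ)
    (X : Matrix (Fin ni) (Fin p) ℝ) (Z : Matrix (Fin ni) (Fin r) ℝ)
    (β : Fin p → ℝ)
    (Ω : Matrix (Fin r) (Fin r) ℝ) (hΩsym : Ωᵀ = Ω) (hΩ : Ω.PosDef)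
    (h1 h2 : Fin ni → ℝ → ℝ)
    (hder : ∀ j x, HasDerivAt (h1 j) (h2 j x) x)
    (hnn : ∀ j x, 0 ≤ h2 j x)
    (F : Fin ni → Filter ℝ) (hFne : ∀ j, (F j).NeBot)
    (hcase : ∀ j,
      (∃ c : ℝ, F j = nhds c ∧ h1 j c = y j ∧ ContinuousAt (h2 j) c) ∨
      ((F j = atTop ∨ F j = atBot) ∧ (¬∃ η : ℝ, h1 j η = y j) ∧
        Tendsto (h1 j) (F j) (nhds (y j)) ∧ Tendsto (h2 j) (F j) (nhds 0) ∧
        Tendsto (fun t => t * h2 j t) (F j) (nhds 0)))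
    (lam : (Fin ni → ℝ) → Fin r → ℝ)
    (hlam : ∀ ηh, lam ηh
      = (Ω + Zᵀ * (Matrix.diagonal fun j => h2 j (ηh j)) * Z)⁻¹ *ᵥ
          (Zᵀ *ᵥ (y - (fun j => h1 j (ηh j))
            + (Matrix.diagonal fun j => h2 j (ηh j)) *ᵥ (ηh - X *ᵥ β)))) :
    (∃ l : Fin r → ℝ, Tendsto lam (Filter.pi F) (nhds l)) ∧
      ((∀ j, ¬∃ η : ℝ, h1 j η = y j) → Tendsto lam (Filter.pi F) (nhds 0)) := by

  classical
  -- Step 1: componentwise limits of the diagonal entries and of the residual vector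
  have key : ∀ j : Fin ni, ∃ dj vj : ℝ, 0 ≤ dj ∧
      Tendsto (fun t => h2 j t) (F j) (nhds dj) ∧
      Tendsto (fun t => y j - h1 j t + h2 j t * (t - (X *ᵥ β) j)) (F j) (nhds vj) ∧
      ((¬∃ η : ℝ, h1 j η = y j) → dj = 0 ∧ vj = 0) := by
    intro j
    rcases hcase j with ⟨c, hF, hc, hcont⟩ | ⟨_, hne, hh1, hh2, hth2⟩
    · refine ⟨h2 j c, y j - h1 j c + h2 j c * (c - (X *ᵥ β) j), hnn j c, ?_, ?_, ?_⟩
      · rw [hF]; exact hcont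
      · rw [hF]
        have hc1 : Tendsto (h1 j) (nhds c) (nhds (h1 j c)) := (hder j c).continuousAt
        have hc2 : Tendsto (h2 j) (nhds c) (nhds (h2 j c)) := hcont
        exact (tendsto_const_nhds.sub hc1).add
          (hc2.mul (tendsto_id.sub tendsto_const_nhds))
      · intro h; exact absurd ⟨c, hc⟩ h
    · refine ⟨0, 0, le_rfl, hh2, ?_, fun _ => ⟨rfl, rfl⟩⟩
      have h0 : Tendsto (fun t => y j - h1 j t + (t * h2 j t - (X *ᵥ β) j * h2 j t))
          (F j) (nhds (y j - y j + (0 - (X *ᵥ β) j * 0))) :=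
        (tendsto_const_nhds.sub hh1).add (hth2.sub (tendsto_const_nhds.mul hh2))
      have h0' : (y j - y j + (0 - (X *ᵥ β) j * 0)) = 0 := by ring
      rw [h0'] at h0
      refine h0.congr (fun t => ?_)
      ring
  choose d v hd0 hd hv hzero using key
  -- Step 2: the limit matrix is positive definite, hence invertible
  have hDpsd : (Matrix.diagonal d).PosSemidef := Matrix.posSemidef_diagonal_iff.mpr hd0
  have hZDZ : (Zᵀ * Matrix.diagonal d * Z).PosSemidef := by
    have := hDpsd.conjTranspose_mul_mul_same Z
    rwa [Matrix.conjTranspose_eq_transpose_of_trivial] at this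
  have hA : (Ω + Zᵀ * Matrix.diagonal d * Z).PosDef := hΩ.add_posSemidef hZDZ
  -- Step 3: the continuous "assembly" function
  set G : (Fin ni → ℝ) × (Fin ni → ℝ) → (Fin r → ℝ) :=
    fun q => (Ω + Zᵀ * Matrix.diagonal q.1 * Z)⁻¹ *ᵥ (Zᵀ *ᵥ q.2) with hG
  have hcontG : ContinuousAt G (d, v) := by
    have hAc : Continuous (fun q : (Fin ni → ℝ) × (Fin ni → ℝ) =>
        Ω + Zᵀ * Matrix.diagonal q.1 * Z) :=
      continuous_const.add
        ((continuous_const.matrix_mul (Continuous.matrix_diagonal continuous_fst)).matrix_mul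
          continuous_const)
    have hinv : ContinuousAt Inv.inv (Ω + Zᵀ * Matrix.diagonal d * Z) := by
      refine continuousAt_matrix_inv _ ?_
      rw [Ring.inverse_eq_inv']
      exact continuousAt_inv₀ hA.det_pos.ne'
    have h1c : ContinuousAt (fun q : (Fin ni → ℝ) × (Fin ni → ℝ) =>
        (Ω + Zᵀ * Matrix.diagonal q.1 * Z)⁻¹) (d, v) := Filter.Tendsto.comp hinv hAc.continuousAt
    have h2c : ContinuousAt (fun q : (Fin ni → ℝ) × (Fin ni → ℝ) => Zᵀ *ᵥ q.2) (d, v) :=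
      (continuous_const.matrix_mulVec continuous_snd).continuousAt
    have hmv : Continuous (fun w : Matrix (Fin r) (Fin r) ℝ × (Fin r → ℝ) => w.1 *ᵥ w.2) :=
      continuous_fst.matrix_mulVec continuous_snd
    exact Filter.Tendsto.comp hmv.continuousAt (ContinuousAt.prodMk h1c h2c)
  -- Step 4: the argument converges along the product filter
  have heval : ∀ j, Tendsto (fun ηh : Fin ni → ℝ => ηh j) (Filter.pi F) (F j) :=
    fun j => Filter.tendsto_eval_pi F j
  have harg : Tendsto (fun ηh : Fin ni → ℝ =>
      ((fun j => h2 j (ηh j)),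
       (fun j => y j - h1 j (ηh j) + h2 j (ηh j) * (ηh j - (X *ᵥ β) j))))
      (Filter.pi F) (nhds (d, v)) := by
    refine Tendsto.prodMk_nhds ?_ ?_
    · exact tendsto_pi_nhds.mpr fun j => (hd j).comp (heval j)
    · exact tendsto_pi_nhds.mpr fun j => (hv j).comp (heval j)
  -- Step 5: `lam` is `G` composed with the argument
  have hlamG : lam = fun ηh =>
      G ((fun j => h2 j (ηh j)),
         (fun j => y j - h1 j (ηh j) + h2 j (ηh j) * (ηh j - (X *ᵥ β) j))) := by
    funext ηh
    rw [hlam, hG]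
    have hw : (y - (fun j => h1 j (ηh j))
        + (Matrix.diagonal fun j => h2 j (ηh j)) *ᵥ (ηh - X *ᵥ β))
        = fun j => y j - h1 j (ηh j) + h2 j (ηh j) * (ηh j - (X *ᵥ β) j) := by
      funext j
      simp [Matrix.mulVec_diagonal]
    rw [hw]
  have hmain : Tendsto lam (Filter.pi F) (nhds (G (d, v))) := by
    rw [hlamG]
    exact Filter.Tendsto.comp hcontG harg
  refine ⟨⟨G (d, v), hmain⟩, fun hall => ?_⟩
  have hdv : d = 0 ∧ v = 0 := by
    constructor <;> funext j
    · exact (hzero j (hall j)).1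
    · exact (hzero j (hall j)).2
  have : G (d, v) = 0 := by
    rw [hG, hdv.1, hdv.2]
    simp
  rwa [this] at hmain
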